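/- Let m ≥ 2, let k : Fin m → ℕ with k_i ≥ 1, and let r : Fin m → ℝ satisfy 0 ≤ r_i < 2^{k_i} − 1 for all i. Then ∏_{i} (2^{k_i+1}/(r_i+1) − 1) > 2^{(∑_i k_i)+1} / (∏_i (r_i+1)) − 1. -/
import Mathlib

lemma aux_one_le {ι : Type*} {s : Finset ι} (a : ι → ℝ) (ha : ∀ i ∈ s, 1 ≤ a i) :
    1 ≤ ∏ i ∈ s, a i := by
  calc (1:ℝ) = ∏ _i ∈ s, 1 := (Finset.prod_const_one).symm
  _ ≤ ∏ i ∈ s, a i := Finset.prod_le_prod (fun j _ => zero_le_one) ha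

lemma aux_le {ι : Type*} {s : Finset ι} (hs : s.Nonempty) (a : ι → ℝ)
    (ha : ∀ i ∈ s, 1 ≤ a i) :
    ∏ i ∈ s, (a i + 1) ≤ 2 ^ (s.card - 1) * (∏ i ∈ s, a i + 1) := by
  induction hs using Finset.Nonempty.cons_induction with
  | singleton i => simp
  | cons i s hi hne ih =>
    have ha' : ∀ j ∈ s, 1 ≤ a j := fun j hj => ha j (Finset.mem_cons_of_mem hj)
    have hP : 1 ≤ ∏ j ∈ s, a j := aux_one_le a ha'
    have hai : 1 ≤ a i := ha i (Finset.mem_cons_self i s)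
    rw [Finset.prod_cons, Finset.prod_cons, Finset.card_cons]
    have hc : s.card + 1 - 1 = (s.card - 1) + 1 := by
      have := hne.card_pos; omega
    rw [hc, pow_succ]
    have h1 := ih ha'
    nlinarith [mul_le_mul_of_nonneg_left h1 (by linarith : (0:ℝ) ≤ a i + 1),
      mul_nonneg (pow_pos (by norm_num : (0:ℝ) < 2) (s.card - 1)).le
        (mul_nonneg (sub_nonneg.2 hai) (sub_nonneg.2 hP))]

lemma aux_lt {ι : Type*} [DecidableEq ι] {s : Finset ι} (hs : 2 ≤ s.card) (a : ι → ℝ)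
    (ha : ∀ i ∈ s, 1 < a i) :
    ∏ i ∈ s, (a i + 1) < 2 ^ (s.card - 1) * (∏ i ∈ s, a i + 1) := by
  obtain ⟨i, hi⟩ := Finset.card_pos.mp (by omega : 0 < s.card)
  have hne : (s.erase i).Nonempty := by
    rw [← Finset.card_pos, Finset.card_erase_of_mem hi]; omega
  have ha' : ∀ j ∈ s.erase i, 1 ≤ a j :=
    fun j hj => (ha j (Finset.mem_of_mem_erase hj)).le
  have hP : 1 < ∏ j ∈ s.erase i, a j := by
    obtain ⟨j0, hj0⟩ := hne
    rw [← Finset.mul_prod_erase _ _ hj0]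
    have h1 : (1:ℝ) ≤ ∏ j ∈ (s.erase i).erase j0, a j :=
      aux_one_le a (fun j hj => ha' j (Finset.mem_of_mem_erase hj))
    nlinarith [ha j0 (Finset.mem_of_mem_erase hj0)]
  have hai : 1 < a i := ha i hi
  have key := aux_le hne a ha'
  rw [← Finset.insert_erase hi, Finset.prod_insert (Finset.notMem_erase i s),
    Finset.prod_insert (Finset.notMem_erase i s),
    Finset.card_insert_of_notMem (Finset.notMem_erase i s)]
  have hc : (s.erase i).card + 1 - 1 = ((s.erase i).card - 1) + 1 := by
    have := hne.card_pos; omega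
  rw [hc, pow_succ]
  nlinarith [mul_le_mul_of_nonneg_left key (by linarith : (0:ℝ) ≤ a i + 1),
    mul_pos (pow_pos (by norm_num : (0:ℝ) < 2) ((s.erase i).card - 1))
      (mul_pos (sub_pos.2 hai) (sub_pos.2 hP))]


/-- For `m ≥ 2`, `k : Fin m → ℕ` with `k_i ≥ 1`, and `r : Fin m → ℝ`
with `0 ≤ r_i < 2^{k_i} − 1` for all `i`:
`∏_i (2^{k_i+1}/(r_i+1) − 1) > 2^{(∑_i k_i)+1} / ∏_i (r_i+1) − 1`. -/
theorem stmt_19 (m : ℕ) (hm : 2 ≤ m) (k : Fin m → ℕ) (hk : ∀ i, 1 ≤ k i)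
    (r : Fin m → ℝ) (hr0 : ∀ i, 0 ≤ r i) (hr1 : ∀ i, r i < (2 : ℝ) ^ k i - 1) :
    ∏ i, ((2 : ℝ) ^ (k i + 1) / (r i + 1) - 1) >
      (2 : ℝ) ^ ((∑ i, k i) + 1) / (∏ i, (r i + 1)) - 1 := by
  have hpos : ∀ i, 0 < r i + 1 := fun i => by linarith [hr0 i]
  set a : Fin m → ℝ := fun i => (2 : ℝ) ^ (k i + 1) / (r i + 1) - 1 with ha_def
  have ha : ∀ i ∈ Finset.univ, 1 < a i := by
    intro i _
    have h2 : r i + 1 < 2 ^ k i := by linarith [hr1 i]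
    have : (2:ℝ) < 2 ^ (k i + 1) / (r i + 1) := by
      rw [lt_div_iff₀ (hpos i), pow_succ]
      nlinarith
    simp only [ha_def]; linarith
  have hcard : (Finset.univ : Finset (Fin m)).card = m := by simp
  have key := aux_lt (by rw [hcard]; exact hm) a ha
  rw [hcard] at key
  have hsimp : ∀ i, a i + 1 = (2 : ℝ) ^ (k i + 1) / (r i + 1) := by
    intro i; simp [ha_def]
  have hQ : 0 < ∏ i, (r i + 1) := Finset.prod_pos (fun i _ => hpos i)
  have hprod : ∏ i, (a i + 1) = 2 ^ ((∑ i, k i) + m) / ∏ i, (r i + 1) := by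
    simp only [hsimp]
    rw [Finset.prod_div_distrib, Finset.prod_pow_eq_pow_sum]
    congr 1
    rw [Finset.sum_add_distrib, Finset.sum_const, hcard, smul_eq_mul, mul_one]
  rw [hprod] at key
  have hsplit : (2:ℝ) ^ ((∑ i, k i) + m) = 2 ^ (m - 1) * 2 ^ ((∑ i, k i) + 1) := by
    rw [← pow_add]
    congr 1
    omega
  rw [hsplit, div_lt_iff₀ hQ] at key
  have h2pos : (0:ℝ) < 2 ^ (m - 1) := pow_pos (by norm_num) _
  rw [gt_iff_lt, sub_lt_iff_lt_add, div_lt_iff₀ hQ]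
  have key' : 2 ^ (m - 1) * (2:ℝ) ^ ((∑ i, k i) + 1)
      < 2 ^ (m - 1) * ((∏ i, a i + 1) * ∏ i, (r i + 1)) := by
    rw [← mul_assoc]; exact key
  exact (mul_lt_mul_iff_right₀ h2pos).mp key'
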